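/- arXiv:1009.0241 — 5 statements merged into one kernel-verified Lean document; each statement's English description precedes it below -/
import Mathlib

section
/- The 4×4 matrix (1/√2)·[[1,0,0,1],[0,1,−1,0],[0,1,1,0],[−1,0,0,1]] is unitary and satisfies the Yang-Baxter equation (R ⊗ I₂)(I₂ ⊗ R)(R ⊗ I₂) = (I₂ ⊗ R)(R ⊗ I₂)(I₂ ⊗ R) on ℂ² ⊗ ℂ². -/
open Matrix

/-- The operator on `(ℂ^ι)^{⊗n}` (modeled as matrices indexed by `Fin n → ι`)
acting as `R` on tensor factors `i, i+1` and as the identity elsewhere. -/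
def localOp {ι : Type} [DecidableEq ι]
    (R : Matrix (ι × ι) (ι × ι) ℂ) (n i : ℕ) (h : i + 1 < n) :
    Matrix (Fin n → ι) (Fin n → ι) ℂ :=
  fun f g =>
    (if ∀ k : Fin n, (k : ℕ) ≠ i → (k : ℕ) ≠ i + 1 → f k = g k then 1 else 0) *
      R (f ⟨i, Nat.lt_of_succ_lt h⟩, f ⟨i + 1, h⟩)
        (g ⟨i, Nat.lt_of_succ_lt h⟩, g ⟨i + 1, h⟩)

/-- The Yang–Baxter equation `(R⊗I)(I⊗R)(R⊗I) = (I⊗R)(R⊗I)(I⊗R)`. -/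
def YangBaxter {ι : Type} [Fintype ι] [DecidableEq ι] (R : Matrix (ι × ι) (ι × ι) ℂ) : Prop :=
  localOp R 3 0 (by omega) * localOp R 3 1 (by omega) * localOp R 3 0 (by omega) =
    localOp R 3 1 (by omega) * localOp R 3 0 (by omega) * localOp R 3 1 (by omega)

/-- The braid relations on `m+1` strands, i.e. with `m` generators `σ_0, …, σ_{m-1}`. -/
def braidRels (m : ℕ) : Set (FreeGroup (Fin m)) :=
  {r | ∃ i j : Fin m, (i : ℕ) + 1 < (j : ℕ) ∧
      r = FreeGroup.of i * FreeGroup.of j * (FreeGroup.of i)⁻¹ * (FreeGroup.of j)⁻¹} ∪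
  {r | ∃ i j : Fin m, (j : ℕ) = (i : ℕ) + 1 ∧
      r = FreeGroup.of i * FreeGroup.of j * FreeGroup.of i *
        (FreeGroup.of j * FreeGroup.of i * FreeGroup.of j)⁻¹}

/-- Reindex a `4×4` matrix as an operator on `ℂ² ⊗ ℂ²` via the standard tensor
basis ordering `(i,j) ↦ 2i + j`. -/
def toR2 (M : Matrix (Fin 4) (Fin 4) ℂ) :
    Matrix (Fin 2 × Fin 2) (Fin 2 × Fin 2) ℂ :=
  fun p q =>
    M ⟨2 * (p.1 : ℕ) + (p.2 : ℕ), by have := p.1.isLt; have := p.2.isLt; omega⟩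
      ⟨2 * (q.1 : ℕ) + (q.2 : ℕ), by have := q.1.isLt; have := q.2.isLt; omega⟩

/-- Integer version of the R-matrix. -/
def M0 : Matrix (Fin 2 × Fin 2) (Fin 2 × Fin 2) ℤ :=
  fun p q =>
    (!![1, 0, 0, 1; 0, 1, -1, 0; 0, 1, 1, 0; -1, 0, 0, 1] : Matrix (Fin 4) (Fin 4) ℤ)
      ⟨2 * (p.1 : ℕ) + (p.2 : ℕ), by have := p.1.isLt; have := p.2.isLt; omega⟩
      ⟨2 * (q.1 : ℕ) + (q.2 : ℕ), by have := q.1.isLt; have := q.2.isLt; omega⟩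

/-- Integer version of localOp. -/
def localOpZ (R : Matrix (Fin 2 × Fin 2) (Fin 2 × Fin 2) ℤ) (n i : ℕ) (h : i + 1 < n) :
    Matrix (Fin n → Fin 2) (Fin n → Fin 2) ℤ :=
  fun f g =>
    (if ∀ k : Fin n, (k : ℕ) ≠ i → (k : ℕ) ≠ i + 1 → f k = g k then 1 else 0) *
      R (f ⟨i, Nat.lt_of_succ_lt h⟩, f ⟨i + 1, h⟩)
        (g ⟨i, Nat.lt_of_succ_lt h⟩, g ⟨i + 1, h⟩)

lemma localOp_map (R : Matrix (Fin 2 × Fin 2) (Fin 2 × Fin 2) ℤ) (n i : ℕ) (h : i + 1 < n) :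
    localOp (R.map (Int.cast : ℤ → ℂ)) n i h = (localOpZ R n i h).map (Int.cast : ℤ → ℂ) := by
  ext f g
  simp only [localOp, localOpZ, Matrix.map_apply]
  split <;> push_cast <;> ring

lemma localOp_smul (c : ℂ) (R : Matrix (Fin 2 × Fin 2) (Fin 2 × Fin 2) ℂ)
    (n i : ℕ) (h : i + 1 < n) :
    localOp (c • R) n i h = c • localOp R n i h := by
  ext f g
  simp only [localOp, Matrix.smul_apply, smul_eq_mul]
  ring

lemma toR2_eq (c : ℂ) :
    toR2 (c • !![1, 0, 0, 1; 0, 1, -1, 0; 0, 1, 1, 0; -1, 0, 0, 1]) =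
      c • (M0.map (Int.cast : ℤ → ℂ)) := by
  ext p q
  simp only [toR2, M0, Matrix.smul_apply, Matrix.map_apply, smul_eq_mul]
  congr 1
  fin_cases p <;> fin_cases q <;> norm_num [Matrix.cons_val_fin_one]

lemma key_YB :
    localOpZ M0 3 0 (by omega) * localOpZ M0 3 1 (by omega) * localOpZ M0 3 0 (by omega) =
      localOpZ M0 3 1 (by omega) * localOpZ M0 3 0 (by omega) * localOpZ M0 3 1 (by omega) := by
  decide

lemma key_U : M0 * M0ᵀ = (2 : ℤ) • 1 := by decide

lemma map_mul_int' {m : Type} [Fintype m] (A B : Matrix m m ℤ) :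
    (A * B).map (Int.cast : ℤ → ℂ) = A.map (Int.cast : ℤ → ℂ) * B.map (Int.cast : ℤ → ℂ) := by
  ext i j
  simp [Matrix.mul_apply, Matrix.map_apply]

lemma map_two_one :
    (((2 : ℤ) • (1 : Matrix (Fin 2 × Fin 2) (Fin 2 × Fin 2) ℤ)).map (Int.cast : ℤ → ℂ)) =
      (2 : ℂ) • 1 := by
  ext i j
  rw [Matrix.map_apply, Matrix.smul_apply, Matrix.smul_apply, Matrix.one_apply, Matrix.one_apply]
  by_cases h : i = j <;> simp [h]

lemma conjTranspose_map_int (A : Matrix (Fin 2 × Fin 2) (Fin 2 × Fin 2) ℤ) :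
    (A.map (Int.cast : ℤ → ℂ))ᴴ = Aᵀ.map (Int.cast : ℤ → ℂ) := by
  ext i j
  simp [Matrix.conjTranspose_apply, Matrix.map_apply, Matrix.transpose_apply]

/-- The matrix `(1/√2)·[[1,0,0,1],[0,1,−1,0],[0,1,1,0],[−1,0,0,1]]` is unitary and
satisfies the Yang–Baxter equation on `ℂ² ⊗ ℂ²`. -/
theorem stmt2 :
    toR2 ((((Real.sqrt 2 : ℝ) : ℂ)⁻¹) • !![1, 0, 0, 1; 0, 1, -1, 0; 0, 1, 1, 0; -1, 0, 0, 1]) ∈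
        Matrix.unitaryGroup (Fin 2 × Fin 2) ℂ ∧
      YangBaxter
        (toR2 ((((Real.sqrt 2 : ℝ) : ℂ)⁻¹) •
          !![1, 0, 0, 1; 0, 1, -1, 0; 0, 1, 1, 0; -1, 0, 0, 1])) := by
  set c : ℂ := (((Real.sqrt 2 : ℝ) : ℂ))⁻¹ with hc
  have hcc : c * c * 2 = 1 := by
    have h2 : ((Real.sqrt 2 : ℝ) : ℂ) * ((Real.sqrt 2 : ℝ) : ℂ) = 2 := by
      rw [← Complex.ofReal_mul, Real.mul_self_sqrt (by norm_num)]
      norm_num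
    have hne : ((Real.sqrt 2 : ℝ) : ℂ) ≠ 0 := by
      simp [Complex.ofReal_ne_zero, Real.sqrt_ne_zero']
    rw [hc, ← mul_inv, h2]
    norm_num
  rw [toR2_eq]
  constructor
  · rw [Matrix.mem_unitaryGroup_iff]
    have hstar : star (c • M0.map (Int.cast : ℤ → ℂ)) = c • (M0ᵀ.map (Int.cast : ℤ → ℂ)) := by
      have hsc : star c = c := by
        simp [hc, Complex.star_def, ← Complex.ofReal_inv]
      rw [Matrix.star_eq_conjTranspose, Matrix.conjTranspose_smul, hsc,
        conjTranspose_map_int]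
    rw [hstar, Matrix.smul_mul, Matrix.mul_smul, smul_smul, ← map_mul_int', key_U,
      map_two_one, smul_smul, hcc, one_smul]
  · unfold YangBaxter
    rw [localOp_smul, localOp_smul, localOp_map, localOp_map]
    simp only [Matrix.smul_mul, Matrix.mul_smul, smul_smul]
    congr 1
    rw [← map_mul_int', ← map_mul_int', ← map_mul_int', ← map_mul_int']
    exact congrArg (fun X => X.map (Int.cast : ℤ → ℂ)) key_YB
end

section
/- In the abstract algebra generated by u_1, u_2 subject to u_i^p = 1 and u_1 u_2 = ω^{−2} u_2 u_1 (ω a primitive p-th root of unity, p an odd prime), the elements g_i = ζ Σ_{j=0}^{p−1} ω^{j²} u_i^j (i = 1,2, with ζ a fixed nonzero scalar) satisfy the braid relation g_1 g_2 g_1 = g_2 g_1 g_2. -/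
private lemma pow_val_natCast' {M : Type*} [Monoid M] {p : ℕ} [NeZero p] {u : M}
    (h : u ^ p = 1) (a : ℕ) : u ^ a = u ^ ((a : ZMod p)).val := by
  rw [ZMod.val_natCast]
  conv_lhs => rw [← Nat.div_add_mod a p]
  rw [pow_add, pow_mul, h, one_pow, one_mul]

private lemma pow_congr' {M : Type*} [Monoid M] {p : ℕ} [NeZero p] {u : M}
    (h : u ^ p = 1) {a b : ℕ} (hab : (a : ZMod p) = (b : ZMod p)) : u ^ a = u ^ b := by
  rw [pow_val_natCast' h a, pow_val_natCast' h b, hab]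

private lemma pow_val_add' {M : Type*} [Monoid M] {p : ℕ} [NeZero p] {u : M}
    (h : u ^ p = 1) (j k : ZMod p) : u ^ (j + k).val = u ^ j.val * u ^ k.val := by
  rw [← pow_add]
  have h1 : (((j + k).val : ℕ) : ZMod p) = ((j.val + k.val : ℕ) : ZMod p) := by
    push_cast
    simp [ZMod.natCast_val, ZMod.cast_id]
  exact pow_congr' h h1

private lemma expand3' {A : Type} [Ring A] [Algebra ℂ A] {ι : Type*} [Fintype ι]
    (f g h : ι → ℂ) (x y z : ι → A) :
    (∑ a, f a • x a) * (∑ b, g b • y b) * (∑ c, h c • z c)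
      = ∑ c, ∑ b, ∑ a, (h c * (g b * f a)) • (x a * y b * z c) := by
  simp only [Finset.sum_mul, Finset.mul_sum, smul_mul_assoc, mul_smul_comm,
    Finset.smul_sum, smul_smul]

private lemma sum3_prod {ι : Type*} [Fintype ι] {M : Type*} [AddCommMonoid M]
    (F : ι → ι → ι → M) :
    ∑ c, ∑ b, ∑ a, F c b a = ∑ t : ι × ι × ι, F t.1 t.2.1 t.2.2 := by
  rw [Fintype.sum_prod_type]
  exact Finset.sum_congr rfl fun c _ =>
    (Fintype.sum_prod_type (fun y : ι × ι => F c y.1 y.2)).symm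

private lemma sum_range_eq' {M : Type*} [AddCommMonoid M] {p : ℕ} [NeZero p] (f : ℕ → M) :
    ∑ j ∈ Finset.range p, f j = ∑ k : ZMod p, f k.val := by
  refine Finset.sum_nbij' (fun j => (j : ZMod p)) (fun k => k.val) ?_ ?_ ?_ ?_ ?_
  · intro a _; exact Finset.mem_univ _
  · intro k _; exact Finset.mem_range.mpr (ZMod.val_lt k)
  · intro a ha; exact ZMod.val_natCast_of_lt (Finset.mem_range.mp ha)
  · intro k _; simp [ZMod.natCast_val, ZMod.cast_id]
  · intro a ha; rw [ZMod.val_natCast_of_lt (Finset.mem_range.mp ha)]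

/-- In the algebra generated by `u₁, u₂` with `uᵢ^p = 1` and `u₁ u₂ = ω^{−2} u₂ u₁`
(`ω` a primitive `p`-th root of unity, `p` an odd prime), the Gaussian elements
`gᵢ = ζ Σ_{j=0}^{p−1} ω^{j²} uᵢ^j` satisfy the braid relation `g₁ g₂ g₁ = g₂ g₁ g₂`. -/
theorem stmt9 (p : ℕ) (hp : p.Prime) (hodd : Odd p)
    (ω : ℂ) (hω : IsPrimitiveRoot ω p)
    (A : Type) [Ring A] [Algebra ℂ A] (u₁ u₂ : A)
    (h₁ : u₁ ^ p = 1) (h₂ : u₂ ^ p = 1)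
    (hcomm : u₁ * u₂ = (ω⁻¹) ^ 2 • (u₂ * u₁)) (ζ : ℂ)
    (g₁ g₂ : A)
    (hg₁ : g₁ = ζ • ∑ j ∈ Finset.range p, ω ^ (j ^ 2) • u₁ ^ j)
    (hg₂ : g₂ = ζ • ∑ j ∈ Finset.range p, ω ^ (j ^ 2) • u₂ ^ j) :
    g₁ * g₂ * g₁ = g₂ * g₁ * g₂ := by
  haveI : NeZero p := ⟨hp.ne_zero⟩
  have hω1 : ω ^ p = 1 := hω.pow_eq_one
  have hωne : ω ≠ 0 := by
    intro h
    rw [h, zero_pow hp.ne_zero] at hω1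
    exact zero_ne_one hω1
  -- the exponent function
  set W : ZMod p → ℂ := fun k => ω ^ k.val with hWdef
  have hWnat : ∀ a : ℕ, ω ^ a = W (a : ZMod p) := fun a => pow_val_natCast' hω1 a
  -- base commutation
  have base : u₂ * u₁ = (ω ^ 2) • (u₁ * u₂) := by
    rw [hcomm, smul_smul, show ω ^ 2 * ω⁻¹ ^ 2 = 1 by
      rw [← mul_pow, mul_inv_cancel₀ hωne, one_pow], one_smul]
  have step1 : ∀ y : ℕ, u₂ ^ y * u₁ = (ω ^ (2 * y)) • (u₁ * u₂ ^ y) := by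
    intro y
    induction y with
    | zero => simp
    | succ y ih =>
      rw [pow_succ, mul_assoc, base, mul_smul_comm, ← mul_assoc, ih,
        smul_mul_assoc, smul_smul, mul_assoc, ← pow_add]
      congr 2
      omega
  have key : ∀ x y : ℕ, u₂ ^ y * u₁ ^ x = (ω ^ (2 * x * y)) • (u₁ ^ x * u₂ ^ y) := by
    intro x y
    induction x with
    | zero => simp
    | succ x ih =>
      have h0 : u₂ ^ y * u₁ ^ (x + 1) = u₂ ^ y * u₁ ^ x * u₁ := by
        rw [pow_succ, mul_assoc]
      rw [h0, ih, smul_mul_assoc, mul_assoc (u₁ ^ x), step1 y,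
        mul_smul_comm, smul_smul, ← pow_add, ← mul_assoc, ← pow_succ]
      congr 2
      ring
  -- ZMod-indexed commutation
  have hWcomm : ∀ b c : ZMod p,
      u₂ ^ b.val * u₁ ^ c.val = W (2 * b * c) • (u₁ ^ c.val * u₂ ^ b.val) := by
    intro b c
    rw [key c.val b.val]
    congr 1
    rw [hWnat]
    congr 1
    push_cast
    simp only [ZMod.natCast_val, ZMod.cast_id]
    ring
  -- multiplication rules for powers
  have hU1 : ∀ j k : ZMod p, u₁ ^ j.val * u₁ ^ k.val = u₁ ^ (j + k).val :=
    fun j k => (pow_val_add' h₁ j k).symm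
  have hU2 : ∀ j k : ZMod p, u₂ ^ j.val * u₂ ^ k.val = u₂ ^ (j + k).val :=
    fun j k => (pow_val_add' h₂ j k).symm
  have hWmul : ∀ j k : ZMod p, W j * W k = W (j + k) :=
    fun j k => (pow_val_add' hω1 j k).symm
  -- Gaussian sums in ZMod form
  set S1 : A := ∑ k : ZMod p, W (k * k) • u₁ ^ k.val with hS1
  set S2 : A := ∑ k : ZMod p, W (k * k) • u₂ ^ k.val with hS2
  have hsum : ∀ (u : A), u ^ p = 1 →
      ∑ j ∈ Finset.range p, ω ^ (j ^ 2) • u ^ j = ∑ k : ZMod p, W (k * k) • u ^ k.val := by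
    intro u hu
    rw [sum_range_eq' (fun j => ω ^ (j ^ 2) • u ^ j)]
    refine Finset.sum_congr rfl fun k _ => ?_
    congr 1
    rw [hWnat]
    congr 1
    push_cast
    simp only [ZMod.natCast_val, ZMod.cast_id]
    ring
  have hg₁' : g₁ = ζ • S1 := by rw [hg₁, hsum u₁ h₁]
  have hg₂' : g₂ = ζ • S2 := by rw [hg₂, hsum u₂ h₂]
  suffices hS : S1 * S2 * S1 = S2 * S1 * S2 by
    rw [hg₁', hg₂']
    simp only [smul_mul_assoc, mul_smul_comm, smul_smul]
    rw [hS]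
  -- expand both triple products
  have T1 : S1 * S2 * S1 = ∑ t : ZMod p × ZMod p × ZMod p,
      W (t.2.2 * t.2.2 + t.2.1 * t.2.1 + t.1 * t.1 + 2 * t.2.1 * t.1)
        • (u₁ ^ (t.2.2 + t.1).val * u₂ ^ t.2.1.val) := by
    rw [hS1, hS2, expand3', sum3_prod]
    refine Finset.sum_congr rfl fun t _ => ?_
    obtain ⟨c, b, a⟩ := t
    -- term: (W(c*c) * (W(b*b) * W(a*a))) • (u₁^a.val * u₂^b.val * u₁^c.val)
    rw [mul_assoc (u₁ ^ a.val), hWcomm b c, mul_smul_comm, smul_smul,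
      ← mul_assoc (u₁ ^ a.val), hU1 a c, hWmul, hWmul, hWmul]
    congr 2
    ring
  have T2 : S2 * S1 * S2 = ∑ t : ZMod p × ZMod p × ZMod p,
      W (t.2.2 * t.2.2 + t.2.1 * t.2.1 + t.1 * t.1 + 2 * t.2.2 * t.2.1)
        • (u₁ ^ t.2.1.val * u₂ ^ (t.2.2 + t.1).val) := by
    rw [hS1, hS2, expand3', sum3_prod]
    refine Finset.sum_congr rfl fun t _ => ?_
    obtain ⟨c, a, b⟩ := t
    -- term: (W(c*c) * (W(b*b) * W(a*a))) • (u₂^a.val * u₁^b.val * u₂^c.val)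
    rw [hWcomm b a, smul_mul_assoc, mul_assoc (u₁ ^ a.val), hU2 b c,
      smul_smul, hWmul, hWmul, hWmul]
    congr 2
    ring
  rw [T1, T2]
  -- reindex with the bijection (c,b,a) ↦ (b+c, a+c, -c)
  refine Fintype.sum_equiv
    ⟨fun t : ZMod p × ZMod p × ZMod p => (t.2.1 + t.1, t.2.2 + t.1, -t.1),
     fun s : ZMod p × ZMod p × ZMod p => (-s.2.2, s.1 + s.2.2, s.2.1 + s.2.2),
     fun t => by
       obtain ⟨c, b, a⟩ := t
       simp only [Prod.mk.injEq]
       refine ⟨by ring, by ring, by ring⟩,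
     fun s => by
       obtain ⟨x, y, z⟩ := s
       simp only [Prod.mk.injEq]
       refine ⟨by ring, by ring, by ring⟩⟩
    _ _ (fun t => ?_)
  obtain ⟨c, b, a⟩ := t
  simp only [Equiv.coe_fn_mk]
  have e1 : -c + (b + c) = b := by ring
  have e3 : a * a + b * b + c * c + 2 * b * c
      = -c * -c + (a + c) * (a + c) + (b + c) * (b + c) + 2 * -c * (a + c) := by ring
  rw [e1, e3]
end

section
/- An algebraic integer λ > 0 that lies in a cyclotomic extension of ℚ and whose minimal polynomial over ℚ is of the form x^s − c for some positive rational c must satisfy s ≤ 2; consequently λ² ∈ ℕ. -/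
open Polynomial IntermediateField

private lemma stmt12_aux_real (lam : ℂ) (him : lam.im = 0) (K : IntermediateField ℚ ℂ)
    [FiniteDimensional ℚ K] [IsGalois ℚ K]
    (hcomm : ∀ σ τ : (K ≃ₐ[ℚ] K), σ * τ = τ * σ)
    (hlamK : lam ∈ K) :
    ∀ z ∈ (minpoly ℚ lam).rootSet ℂ, z.im = 0 := by
  set x : K := ⟨lam, hlamK⟩ with hxdef
  set E : IntermediateField ℚ K := ℚ⟮x⟯ with hEdef
  haveI hnormalE : IsGalois ℚ (↥E) := by
    haveI : E.fixingSubgroup.Normal := by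
      constructor
      intro n hn g
      have : g * n * g⁻¹ = n := by rw [hcomm g n]; group
      rwa [this]
    have h1 := IsGalois.fixedField_fixingSubgroup E
    rw [← h1]
    exact IsGalois.of_fixedField_normal_subgroup _
  have hminx : minpoly ℚ lam = minpoly ℚ x := by
    have : Function.Injective (algebraMap K ℂ) := (algebraMap K ℂ).injective
    have h2 := minpoly.algebraMap_eq (A := ℚ) this x
    rw [← h2]; rfl
  have hsplits : ((minpoly ℚ lam).map (algebraMap ℚ (↥E))).Splits := by
    rw [hminx, ← minpoly_gen ℚ x]
    exact Normal.splits inferInstance (AdjoinSimple.gen ℚ x)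
  -- all roots in ℂ are real
  intro z hz
  set f : (↥E) →ₐ[ℚ] ℂ := K.val.comp E.val with hfdef
  rw [← hsplits.image_rootSet f] at hz
  obtain ⟨r, -, rfl⟩ := hz
  have key : ∀ y, ∀ _ : y ∈ E, ((y : K) : ℂ).im = 0 := by
    intro y hy
    rw [hEdef] at hy
    induction hy using IntermediateField.adjoin_induction with
    | mem w hw =>
        rcases hw with rfl
        simpa [hxdef] using him
    | algebraMap q => exact Complex.ratCast_im q
    | add a b ha hb hia hib => push_cast; simp [Complex.add_im, hia, hib]
    | inv a ha hia =>
        have : ((a⁻¹ : K) : ℂ) = ((a : K) : ℂ)⁻¹ := by norm_cast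
        rw [this, Complex.inv_im, hia]; simp
    | mul a b ha hb hia hib => push_cast; simp [Complex.mul_im, hia, hib]
  exact key (r : K) r.2

private lemma stmt12_aux_final (lam : ℂ) (hre : 0 < lam.re) (him : lam.im = 0)
    (hint : IsIntegral ℤ lam) (s : ℕ) (c : ℚ) (hc : 0 < c)
    (hmin : minpoly ℚ lam = X ^ s - C c)
    (hreal : ∀ z ∈ (minpoly ℚ lam).rootSet ℂ, z.im = 0) :
    s ≤ 2 ∧ ∃ k : ℕ, lam ^ 2 = k := by
  have hQint : IsIntegral ℚ lam := hint.tower_top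
  have hs1 : 0 < s := by
    have := minpoly.natDegree_pos hQint
    rwa [hmin, natDegree_X_pow_sub_C] at this
  have hlams : lam ^ s = (c : ℂ) := by
    have := minpoly.aeval ℚ lam
    rw [hmin] at this
    simp only [map_sub, map_pow, aeval_X, aeval_C] at this
    rw [sub_eq_zero] at this
    simpa using this
  have hs2 : s ≤ 2 := by
    by_contra hgt
    push_neg at hgt
    set w : ℂ := Complex.exp ((2 * Real.pi / s : ℝ) * Complex.I) with hwdef
    have hws : w ^ s = 1 := by
      rw [hwdef, ← Complex.exp_nat_mul]
      have hs0 : (s : ℂ) ≠ 0 := Nat.cast_ne_zero.mpr hs1.ne'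
      have : (s : ℂ) * ((2 * Real.pi / s : ℝ) * Complex.I) = 2 * Real.pi * Complex.I := by
        push_cast
        field_simp
      rw [this, Complex.exp_two_pi_mul_I]
    have hmemroot : lam * w ∈ (minpoly ℚ lam).rootSet ℂ := by
      rw [Polynomial.mem_rootSet]
      refine ⟨minpoly.ne_zero hQint, ?_⟩
      rw [hmin]
      simp only [map_sub, map_pow, aeval_X, aeval_C]
      rw [mul_pow, hlams, hws, mul_one]; simp
    have him2 := hreal _ hmemroot
    have hwim : w.im = Real.sin (2 * Real.pi / s) := by
      rw [hwdef, Complex.exp_ofReal_mul_I_im]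
    have hsinpos : 0 < Real.sin (2 * Real.pi / s) := by
      apply Real.sin_pos_of_pos_of_lt_pi
      · positivity
      · rw [div_lt_iff₀ (by positivity)]
        have : (3 : ℝ) ≤ s := by exact_mod_cast hgt
        nlinarith [Real.pi_pos]
    rw [Complex.mul_im, him, hwim] at him2
    nlinarith
  refine ⟨hs2, ?_⟩
  -- c is a positive integer
  have hci : IsIntegral ℤ c := by
    have h1 : IsIntegral ℤ ((algebraMap ℚ ℂ) c) := by
      have : (algebraMap ℚ ℂ) c = lam ^ s := by rw [hlams]; simp
      rw [this]
      exact hint.pow s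
    exact (isIntegral_algebraMap_iff (algebraMap ℚ ℂ).injective).mp h1
  obtain ⟨m, hm⟩ := IsIntegrallyClosed.isIntegral_iff.mp hci
  have hmpos : 0 < m := by
    have : (0 : ℚ) < (m : ℚ) := by rw [show ((m : ℚ)) = c from hm]; exact hc
    exact_mod_cast this
  interval_cases s
  · -- s = 1
    refine ⟨(m.toNat) ^ 2, ?_⟩
    have hl : lam = (c : ℂ) := by simpa using hlams
    rw [hl, ← hm]
    simp only [eq_intCast]
    norm_cast
    simp [Int.toNat_of_nonneg hmpos.le]
  · -- s = 2
    refine ⟨m.toNat, ?_⟩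
    rw [hlams, ← hm]
    simp only [eq_intCast]
    norm_cast
    simp [Int.toNat_of_nonneg hmpos.le]

/-- A positive real algebraic integer lying in a cyclotomic extension of `ℚ` whose
minimal polynomial over `ℚ` has the form `x^s − c` with `c` a positive rational must
have `s ≤ 2`; consequently its square is a natural number. -/
theorem stmt12 (lam : ℂ) (hre : 0 < lam.re) (him : lam.im = 0)
    (hint : IsIntegral ℤ lam)
    (hcyc : ∃ N : ℕ, 0 < N ∧
      lam ∈ Algebra.adjoin ℚ ({Complex.exp (2 * Real.pi * Complex.I / N)} : Set ℂ))
    (s : ℕ) (c : ℚ) (hc : 0 < c)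
    (hmin : minpoly ℚ lam = X ^ s - C c) :
    s ≤ 2 ∧ ∃ k : ℕ, lam ^ 2 = k := by
  obtain ⟨N, hN, hmem⟩ := hcyc
  set ζ := Complex.exp (2 * Real.pi * Complex.I / N) with hζdef
  have hζ : IsPrimitiveRoot ζ N := Complex.isPrimitiveRoot_exp N hN.ne'
  set K : IntermediateField ℚ ℂ := ℚ⟮ζ⟯ with hKdef
  have hζint : IsIntegral ℚ ζ := (hζ.isIntegral hN).tower_top
  haveI : NeZero N := ⟨hN.ne'⟩
  haveI : IsCyclotomicExtension {N} ℚ K := by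
    have H := IntermediateField.adjoin_simple_toSubalgebra_of_isAlgebraic hζint.isAlgebraic
    refine IsCyclotomicExtension.equiv _ _ _ (h := ?_) (.refl : K.toSubalgebra ≃ₐ[ℚ] _)
    rw [hKdef, H]
    exact (show IsPrimitiveRoot ζ N from hζ).adjoin_isCyclotomicExtension ℚ
  haveI : FiniteDimensional ℚ K := IsCyclotomicExtension.finiteDimensional {N} ℚ K
  haveI : IsGalois ℚ K := IsCyclotomicExtension.isGalois {N} ℚ K
  have hcomm : ∀ σ τ : (K ≃ₐ[ℚ] K), σ * τ = τ * σ := by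
    intro σ τ
    exact (IsCyclotomicExtension.isMulCommutative {N} ℚ K).is_comm.comm σ τ
  have hlamK : lam ∈ K := by
    have h1 : Algebra.adjoin ℚ ({ζ} : Set ℂ) ≤ K.toSubalgebra :=
      IntermediateField.algebra_adjoin_le_adjoin ℚ {ζ}
    exact h1 hmem
  exact stmt12_aux_final lam hre him hint s c hc hmin
    (stmt12_aux_real lam him K hcomm hlamK)
end

section
/- Let F_n denote the Fibonacci-type dimension sequence defined by the Fibonacci fusion rules: d_1(1) = 0, d_1(τ) = 1, and d_{n+1}(1) = d_n(τ), d_{n+1}(τ) = d_n(1) + d_n(τ). Then there is no integer m ≥ 1 and sequence of positive integer pairs (a_n, b_n) with m^n = a_n·d_n(1) + b_n·d_n(τ) and m·(a_n, b_n) obtained from (a_{n+1}, b_{n+1}) via the fusion inclusion matrix [[0,1],[1,1]] for all large n; i.e., the golden-ratio Perron-Frobenius eigenvalue (1+√5)/2 obstructs combinatorial localization. -/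
set_option maxHeartbeats 1000000


/-- The Fibonacci fusion rules cannot be combinatorially localized: with dimension
sequence `d 1 = (0,1)`, `d (n+1) = ((d n).2, (d n).1 + (d n).2)` (fusion matrix
`[[0,1],[1,1]]`), there is no `m ≥ 1`, depth `k`, and sequence of strictly positive
integer pairs `a n` with `m^n = ⟨a n, d n⟩` and `m · a n = G · a (n+1)` for all
`n ≥ k`. -/
theorem stmt15 (d : ℕ → ℕ × ℕ) (hd1 : d 1 = (0, 1))
    (hd : ∀ n, d (n + 1) = ((d n).2, (d n).1 + (d n).2)) :
    ¬ ∃ (m : ℕ) (a : ℕ → ℕ × ℕ) (k : ℕ), 1 ≤ m ∧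
      ∀ n, k ≤ n →
        0 < (a n).1 ∧ 0 < (a n).2 ∧
        m ^ n = (a n).1 * (d n).1 + (a n).2 * (d n).2 ∧
        m * (a n).1 = (a (n + 1)).2 ∧
        m * (a n).2 = (a (n + 1)).1 + (a (n + 1)).2 := by
  rintro ⟨m, a, k, hm, h⟩
  -- d (n+1) = (fib n, fib (n+1))
  have hdfib : ∀ n, d (n + 1) = (Nat.fib n, Nat.fib (n + 1)) := by
    intro n
    induction n with
    | zero => simpa using hd1
    | succ n ih => rw [hd, ih, Nat.fib_add_two]
  set w : ℕ → ℤ := fun n =>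
    ((a n).1 : ℤ) ^ 2 + ((a n).1 : ℤ) * ((a n).2 : ℤ) - ((a n).2 : ℤ) ^ 2 with hwdef
  -- recursion for w
  have hw : ∀ n, k ≤ n → w (n + 1) = -(m : ℤ) ^ 2 * w n := by
    intro n hn
    obtain ⟨_, _, _, e1, e2⟩ := h n hn
    have e1' : (m : ℤ) * ((a n).1 : ℤ) = ((a (n + 1)).2 : ℤ) := by exact_mod_cast e1
    have e2' : (m : ℤ) * ((a n).2 : ℤ) = ((a (n + 1)).1 : ℤ) + ((a (n + 1)).2 : ℤ) := by
      exact_mod_cast e2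
    have hX : ((a (n + 1)).1 : ℤ) = (m : ℤ) * ((a n).2 : ℤ) - (m : ℤ) * ((a n).1 : ℤ) := by
      linarith
    have hY : ((a (n + 1)).2 : ℤ) = (m : ℤ) * ((a n).1 : ℤ) := e1'.symm
    simp only [hwdef, hX, hY]
    ring
  -- w k ≠ 0
  obtain ⟨hxk, hyk, -, -, -⟩ := h k le_rfl
  have hwk : w k ≠ 0 := by
    intro h0
    have hxk' : (0 : ℤ) < ((a k).1 : ℤ) := by exact_mod_cast hxk
    have hyk' : (0 : ℤ) < ((a k).2 : ℤ) := by exact_mod_cast hyk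
    simp only [hwdef] at h0
    have h5i : (2 * ((a k).1 : ℤ) + ((a k).2 : ℤ)) ^ 2 = 5 * ((a k).2 : ℤ) ^ 2 := by
      nlinarith [h0]
    have h5 : ((2 * (a k).1 + (a k).2 : ℕ) : ℝ) ^ 2 = 5 * (((a k).2 : ℕ) : ℝ) ^ 2 := by
      push_cast at h5i ⊢
      exact_mod_cast h5i
    have hyR : (0 : ℝ) < (((a k).2 : ℕ) : ℝ) := by exact_mod_cast hyk
    set r : ℝ := ((2 * (a k).1 + (a k).2 : ℕ) : ℝ) / (((a k).2 : ℕ) : ℝ) with hr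
    have hB : (((a k).2 : ℕ) : ℝ) ≠ 0 := ne_of_gt hyR
    have hr2 : r ^ 2 = 5 := by
      rw [hr, div_pow, h5, mul_div_assoc, div_self (pow_ne_zero 2 hB), mul_one]
    have hrpos : 0 ≤ r := by positivity
    have hsqrt : Real.sqrt 5 = r := by rw [← hr2, Real.sqrt_sq hrpos]
    have hirr : Irrational (Real.sqrt 5) :=
      (Nat.Prime.irrational_sqrt (by norm_num : Nat.Prime 5))
    rw [hsqrt] at hirr
    have hrq : r = ((((2 * (a k).1 + (a k).2 : ℕ) : ℚ) / (((a k).2 : ℕ) : ℚ) : ℚ) : ℝ) := by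
      rw [hr]; push_cast; ring
    rw [hrq] at hirr
    exact (Rat.not_irrational _) hirr
  -- growth of |w|
  have hmZ : (0 : ℤ) < (m : ℤ) := by exact_mod_cast hm
  have habs : ∀ j, |w (k + j)| = (m : ℤ) ^ (2 * j) * |w k| := by
    intro j
    induction j with
    | zero => simp
    | succ j ih =>
      have heq : w (k + (j + 1)) = -(m : ℤ) ^ 2 * w (k + j) :=
        hw (k + j) (Nat.le_add_right _ _)
      rw [heq, abs_mul, ih, abs_neg, abs_pow, abs_of_nonneg hmZ.le]
      ring
  -- pairing bounds
  have hpair : ∀ n, k ≤ n → 1 ≤ n →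
      (a n).1 * Nat.fib (n - 1) ≤ m ^ n ∧ (a n).2 * Nat.fib n ≤ m ^ n := by
    intro n hn h1
    obtain ⟨-, -, hp, -, -⟩ := h n hn
    obtain ⟨n', rfl⟩ : ∃ n', n = n' + 1 := ⟨n - 1, (Nat.succ_pred_eq_of_pos h1).symm⟩
    rw [hdfib n'] at hp
    dsimp only at hp
    simp only [Nat.add_sub_cancel]
    constructor <;> omega
  -- choose n large
  set N : ℕ := k + 3 * m ^ (2 * k) + 6 with hN
  have hkN : k ≤ N := by omega
  have h1N : 1 ≤ N := by omega
  obtain ⟨hb1, hb2⟩ := hpair N hkN h1N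
  set F : ℤ := (Nat.fib (N - 1) : ℤ) with hF
  set X : ℤ := ((a N).1 : ℤ) with hX
  set Y : ℤ := ((a N).2 : ℤ) with hY
  set M : ℤ := (m : ℤ) ^ N with hM
  have hXnn : (0:ℤ) ≤ X := by positivity
  have hYnn : (0:ℤ) ≤ Y := by positivity
  have hFnn : (0:ℤ) ≤ F := by positivity
  have hMnn : (0:ℤ) ≤ M := by positivity
  have hFX : F * X ≤ M := by
    rw [hF, hX, hM]
    exact_mod_cast Nat.mul_comm (a N).1 (Nat.fib (N-1)) ▸ hb1
  have hFY : F * Y ≤ M := by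
    have hfible : (Nat.fib (N - 1) : ℤ) ≤ (Nat.fib N : ℤ) :=
      Int.ofNat_le.mpr (Nat.fib_mono (Nat.sub_le N 1))
    have h2 : (Nat.fib N : ℤ) * Y ≤ M := by
      rw [hY, hM]
      exact_mod_cast Nat.mul_comm (a N).2 (Nat.fib N) ▸ hb2
    calc F * Y ≤ (Nat.fib N : ℤ) * Y := by
            exact mul_le_mul_of_nonneg_right (by rw [hF]; exact hfible) hYnn
      _ ≤ M := h2
  -- bound F^2 * |w N| ≤ 3 M^2
  have habsle : |w N| ≤ X ^ 2 + X * Y + Y ^ 2 := by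
    rw [abs_le]
    constructor <;> simp only [hwdef, ← hX, ← hY] <;>
      nlinarith [sq_nonneg X, sq_nonneg Y, mul_nonneg hXnn hYnn]
  have h1 : (F * X) * (F * X) ≤ M * M :=
    mul_le_mul hFX hFX (mul_nonneg hFnn hXnn) hMnn
  have h2 : (F * Y) * (F * Y) ≤ M * M :=
    mul_le_mul hFY hFY (mul_nonneg hFnn hYnn) hMnn
  have h3 : (F * X) * (F * Y) ≤ M * M :=
    mul_le_mul hFX hFY (mul_nonneg hFnn hYnn) hMnn
  have hbound : F ^ 2 * |w N| ≤ 3 * M ^ 2 := by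
    have h4 : F ^ 2 * |w N| ≤ F ^ 2 * (X ^ 2 + X * Y + Y ^ 2) :=
      mul_le_mul_of_nonneg_left habsle (by positivity)
    have h5 : F ^ 2 * (X ^ 2 + X * Y + Y ^ 2)
        = (F * X) * (F * X) + (F * X) * (F * Y) + (F * Y) * (F * Y) := by ring
    have h6 : M * M = M ^ 2 := by ring
    linarith [h1, h2, h3, h4, h5, h6]
  -- lower bound on |w N|
  have hwklb : (1:ℤ) ≤ |w k| := by
    have := abs_pos.mpr hwk
    omega
  have hlow : (m : ℤ) ^ (2 * (N - k)) ≤ |w N| := by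
    have hh := habs (N - k)
    rw [show k + (N - k) = N by omega] at hh
    rw [hh]
    exact le_mul_of_one_le_right (pow_nonneg hmZ.le _) hwklb
  -- combine: F^2 ≤ 3 * m^(2k)
  have hmpow : M ^ 2 = (m : ℤ) ^ (2 * (N - k)) * (m : ℤ) ^ (2 * k) := by
    rw [hM, ← pow_add, ← pow_mul]
    congr 1
    omega
  have hfinal : F ^ 2 ≤ 3 * (m : ℤ) ^ (2 * k) := by
    have hmp : (0:ℤ) < (m : ℤ) ^ (2 * (N - k)) := pow_pos hmZ _
    have hstep : F ^ 2 * (m : ℤ) ^ (2 * (N - k)) ≤ 3 * ((m : ℤ) ^ (2 * (N - k)) * (m : ℤ) ^ (2 * k)) := by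
      calc F ^ 2 * (m : ℤ) ^ (2 * (N - k)) ≤ F ^ 2 * |w N| :=
            mul_le_mul_of_nonneg_left hlow (by positivity)
        _ ≤ 3 * M ^ 2 := hbound
        _ = 3 * ((m : ℤ) ^ (2 * (N - k)) * (m : ℤ) ^ (2 * k)) := by rw [hmpow]
    have := (mul_le_mul_iff_left₀ hmp).mp
      (by linarith : F ^ 2 * (m : ℤ) ^ (2 * (N - k)) ≤ (3 * (m : ℤ) ^ (2 * k)) * (m : ℤ) ^ (2 * (N - k)))
    exact this
  -- but F is big
  have hfibbig : 3 * m ^ (2 * k) + 5 ≤ Nat.fib (N - 1) := by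
    have h5 : 5 ≤ N - 1 := by omega
    have := Nat.le_fib_self h5
    omega
  have hfibbig' : 3 * (m : ℤ) ^ (2 * k) + 5 ≤ F := by
    rw [hF]; exact_mod_cast hfibbig
  have hpk : (1:ℤ) ≤ (m : ℤ) ^ (2 * k) := one_le_pow₀ (by exact_mod_cast hm)
  set t : ℤ := (m : ℤ) ^ (2 * k) with ht
  have htnn : (0:ℤ) ≤ t := by positivity
  have hsq : (3 * t + 5) * (3 * t + 5) ≤ F * F :=
    mul_le_mul hfibbig' hfibbig' (by positivity) hFnn
  have hsq' : 9 * (t * t) + 30 * t + 25 ≤ F ^ 2 := by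
    have hr : (3 * t + 5) * (3 * t + 5) = 9 * (t * t) + 30 * t + 25 := by ring
    have hr2 : F * F = F ^ 2 := by ring
    linarith [hsq]
  have htt : 1 * t ≤ t * t := mul_le_mul_of_nonneg_right hpk htnn
  linarith [hsq', htt, hfinal, hpk]
end

section
/- 2·cos(π/ℓ) is the square root of a nonnegative integer if and only if ℓ ∈ {1, 2, 3, 4, 6} (for integers ℓ ≥ 1). -/
open Real

lemma cos_pi_div_nat_inj (a b : ℕ) (ha : 1 ≤ a) (hb : 1 ≤ b)
    (h : Real.cos (Real.pi / a) = Real.cos (Real.pi / b)) : a = b := by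
  have hpi := Real.pi_pos
  have ha0 : (0:ℝ) < a := by exact_mod_cast ha
  have hb0 : (0:ℝ) < b := by exact_mod_cast hb
  have ha1 : (1:ℝ) ≤ a := by exact_mod_cast ha
  have hb1 : (1:ℝ) ≤ b := by exact_mod_cast hb
  have hma : Real.pi / a ∈ Set.Icc 0 Real.pi := by
    constructor
    · positivity
    · rw [div_le_iff₀ ha0]; nlinarith
  have hmb : Real.pi / b ∈ Set.Icc 0 Real.pi := by
    constructor
    · positivity
    · rw [div_le_iff₀ hb0]; nlinarith
  have := Real.injOn_cos hma hmb h
  have : (a:ℝ) = b := by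
    field_simp at this
    exact_mod_cast this.symm
  exact_mod_cast this

/-- For integers `ℓ ≥ 1`, `2cos(π/ℓ)` is the square root of a nonnegative integer,
i.e. `(2cos(π/ℓ))² ∈ ℕ`, if and only if `ℓ ∈ {1, 2, 3, 4, 6}`. -/
theorem stmt16 (ℓ : ℕ) (hℓ : 1 ≤ ℓ) :
    (∃ k : ℕ, (2 * Real.cos (Real.pi / ℓ)) ^ 2 = k) ↔
      ℓ = 1 ∨ ℓ = 2 ∨ ℓ = 3 ∨ ℓ = 4 ∨ ℓ = 6 := by
  have hpi := Real.pi_pos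
  constructor
  · rintro ⟨k, hk⟩
    rcases eq_or_lt_of_le hℓ with h1 | h2
    · exact Or.inl h1.symm
    have hℓ2 : (2:ℝ) ≤ ℓ := by exact_mod_cast h2
    have hℓ0 : (0:ℝ) < ℓ := by linarith
    have hle : Real.pi / ℓ ≤ Real.pi / 2 := by
      apply div_le_div_of_nonneg_left (le_of_lt hpi) (by norm_num) hℓ2
    have hgt : 0 < Real.pi / ℓ := by positivity
    have hcos0 : 0 ≤ Real.cos (Real.pi / ℓ) :=
      Real.cos_nonneg_of_mem_Icc ⟨by linarith, hle⟩
    have hcos1 : Real.cos (Real.pi / ℓ) ≤ 1 := Real.cos_le_one _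
    have h2c : 0 ≤ 2 * Real.cos (Real.pi / ℓ) := by linarith
    have hsq : 2 * Real.cos (Real.pi / ℓ) = Real.sqrt k := by
      rw [← hk, Real.sqrt_sq h2c]
    have hk4 : (k:ℝ) ≤ 4 := by nlinarith
    have hk4' : k ≤ 4 := by exact_mod_cast hk4
    interval_cases k
    · -- k = 0 : cos = 0 = cos(π/2), ℓ = 2
      have : Real.cos (Real.pi / ℓ) = Real.cos (Real.pi / (2:ℕ)) := by
        push_cast
        rw [Real.cos_pi_div_two]
        simpa using hsq
      exact Or.inr (Or.inl (cos_pi_div_nat_inj ℓ 2 hℓ (by norm_num) this))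
    · have : Real.cos (Real.pi / ℓ) = Real.cos (Real.pi / (3:ℕ)) := by
        push_cast
        rw [Real.cos_pi_div_three]
        simp at hsq; linarith
      exact Or.inr (Or.inr (Or.inl (cos_pi_div_nat_inj ℓ 3 hℓ (by norm_num) this)))
    · have : Real.cos (Real.pi / ℓ) = Real.cos (Real.pi / (4:ℕ)) := by
        push_cast
        rw [Real.cos_pi_div_four]
        norm_num at hsq; linarith
      exact Or.inr (Or.inr (Or.inr (Or.inl (cos_pi_div_nat_inj ℓ 4 hℓ (by norm_num) this))))
    · have : Real.cos (Real.pi / ℓ) = Real.cos (Real.pi / (6:ℕ)) := by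
        push_cast
        rw [Real.cos_pi_div_six]
        norm_num at hsq; linarith
      exact Or.inr (Or.inr (Or.inr (Or.inr (cos_pi_div_nat_inj ℓ 6 hℓ (by norm_num) this))))
    · -- k = 4 : cos = 1, impossible since π/ℓ > 0
      exfalso
      have h1 : Real.cos (Real.pi / ℓ) = 1 := by
        norm_num at hk
        nlinarith
      have : Real.pi / ℓ = 0 := by
        have hmem : Real.pi / ℓ ∈ Set.Icc 0 Real.pi := ⟨le_of_lt hgt, by linarith⟩
        have hmem0 : (0:ℝ) ∈ Set.Icc 0 Real.pi := ⟨le_refl _, le_of_lt hpi⟩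
        apply Real.injOn_cos hmem hmem0
        rw [h1, Real.cos_zero]
      linarith
  · rintro (rfl | rfl | rfl | rfl | rfl)
    · exact ⟨4, by norm_num [Real.cos_pi]⟩
    · exact ⟨0, by norm_num [Real.cos_pi_div_two]⟩
    · exact ⟨1, by norm_num [Real.cos_pi_div_three]⟩
    · refine ⟨2, ?_⟩
      push_cast
      rw [Real.cos_pi_div_four]
      rw [show (2:ℝ) * (Real.sqrt 2 / 2) = Real.sqrt 2 by ring]
      rw [Real.sq_sqrt (by norm_num : (2:ℝ) ≥ 0)]
    · refine ⟨3, ?_⟩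
      push_cast
      rw [Real.cos_pi_div_six]
      rw [show (2:ℝ) * (Real.sqrt 3 / 2) = Real.sqrt 3 by ring]
      rw [Real.sq_sqrt (by norm_num : (3:ℝ) ≥ 0)]
end
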